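/- Let W1 and W2 be B-DMCs with finite output alphabets Y1 and Y2. Then ∑_{y1 ∈ Y1} ∑_{y2 ∈ Y2} (1/2)·(√(W1(y1|0)·W2(y2|0)) + √(W1(y1|1)·W2(y2|1)))·(√(W1(y1|0)·W2(y2|1)) + √(W1(y1|1)·W2(y2|0))) = Z(W1) + Z(W2). -/
import Mathlib


open Finset Real

/-- A binary-input discrete memoryless channel (B-DMC): nonnegative entries
and each row (fixed input) sums to 1. -/
def IsBDMC {Y : Type*} [Fintype Y] (W : Y → ZMod 2 → ℝ) : Prop :=
  (∀ y x, 0 ≤ W y x) ∧ (∀ x, ∑ y, W y x = 1)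

/-- Bhattacharyya parameter Z(W). -/
noncomputable def bhatt {Y : Type*} [Fintype Y] (W : Y → ZMod 2 → ℝ) : ℝ :=
  ∑ y, Real.sqrt (W y 0 * W y 1)

lemma cross_term (a0 a1 b0 b1 : ℝ) (ha0 : 0 ≤ a0) (ha1 : 0 ≤ a1)
    (hb0 : 0 ≤ b0) (hb1 : 0 ≤ b1) :
    (1 / 2) * (Real.sqrt (a0 * b0) + Real.sqrt (a1 * b1)) *
        (Real.sqrt (a0 * b1) + Real.sqrt (a1 * b0)) =
      (1 / 2) * ((a0 + a1) * Real.sqrt (b0 * b1) + (b0 + b1) * Real.sqrt (a0 * a1)) := by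
  rw [Real.sqrt_mul ha0, Real.sqrt_mul ha1, Real.sqrt_mul ha0, Real.sqrt_mul ha1,
    Real.sqrt_mul hb0, Real.sqrt_mul ha0]
  have e0 : Real.sqrt a0 * Real.sqrt a0 = a0 := Real.mul_self_sqrt ha0
  have e1 : Real.sqrt a1 * Real.sqrt a1 = a1 := Real.mul_self_sqrt ha1
  have f0 : Real.sqrt b0 * Real.sqrt b0 = b0 := Real.mul_self_sqrt hb0
  have f1 : Real.sqrt b1 * Real.sqrt b1 = b1 := Real.mul_self_sqrt hb1
  linear_combination (1/2) * Real.sqrt b0 * Real.sqrt b1 * e0 + (1/2) * Real.sqrt b0 * Real.sqrt b1 * e1 + (1/2) * Real.sqrt a0 * Real.sqrt a1 * f0 + (1/2) * Real.sqrt a0 * Real.sqrt a1 * f1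

/-- the cross-term sum equals Z(W1) + Z(W2). -/
theorem cross_sum_eq {Y1 Y2 : Type*} [Fintype Y1] [Fintype Y2]
    (W1 : Y1 → ZMod 2 → ℝ) (W2 : Y2 → ZMod 2 → ℝ)
    (h1 : IsBDMC W1) (h2 : IsBDMC W2) :
    ∑ y1, ∑ y2,
      (1 / 2) *
        (Real.sqrt (W1 y1 0 * W2 y2 0) + Real.sqrt (W1 y1 1 * W2 y2 1)) *
        (Real.sqrt (W1 y1 0 * W2 y2 1) + Real.sqrt (W1 y1 1 * W2 y2 0)) =
      bhatt W1 + bhatt W2 := by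
  have key : ∀ (y1 : Y1) (y2 : Y2),
      (1 / 2) *
        (Real.sqrt (W1 y1 0 * W2 y2 0) + Real.sqrt (W1 y1 1 * W2 y2 1)) *
        (Real.sqrt (W1 y1 0 * W2 y2 1) + Real.sqrt (W1 y1 1 * W2 y2 0)) =
      (1 / 2) * ((W1 y1 0 + W1 y1 1) * Real.sqrt (W2 y2 0 * W2 y2 1) +
        (W2 y2 0 + W2 y2 1) * Real.sqrt (W1 y1 0 * W1 y1 1)) := fun y1 y2 =>
    cross_term _ _ _ _ (h1.1 y1 0) (h1.1 y1 1) (h2.1 y2 0) (h2.1 y2 1)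
  simp only [key]
  have s1 : ∑ y1, (W1 y1 0 + W1 y1 1) = 2 := by
    rw [Finset.sum_add_distrib, h1.2 0, h1.2 1]; norm_num
  have s2 : ∑ y2, (W2 y2 0 + W2 y2 1) = 2 := by
    rw [Finset.sum_add_distrib, h2.2 0, h2.2 1]; norm_num
  simp only [mul_add, Finset.sum_add_distrib, Finset.mul_sum]
  rw [Finset.sum_comm (f := fun y1 y2 => (1:ℝ)/2 * ((W2 y2 0 + W2 y2 1) * Real.sqrt (W1 y1 0 * W1 y1 1)))]
  simp only [← Finset.mul_sum, ← Finset.sum_mul]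
  rw [s1, s2, bhatt, bhatt]
  ring
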